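/- Let V be a commutative unital quantale, F : Type u ⥤ Type u a functor, and E, E' lax extensions of F to V-Rel. Suppose that for every V-category (X,a), E a 𝔵 𝔶 ≤ E' a 𝔵 𝔶 for all 𝔵,𝔶 ∈ F.obj X (i.e. the induced liftings satisfy I(E) ≤ I(E')). Then E r 𝔵 𝔶 ≤ E' r 𝔵 𝔶 for every V-relation r : X → Y → V and all 𝔵 ∈ F.obj X, 𝔶 ∈ F.obj Y. (The assignment of induced liftings to lax extensions is order-reflecting.) -/

import Mathlib

universe u v w

open CategoryTheory

/-- `V` is a (commutative unital) quantale: the tensor distributes over suprema. -/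
def QuantaleLaw (V : Type u) [CompleteLattice V] [CommMonoid V] : Prop :=
  ∀ (u : V) (s : Set V), u * sSup s = ⨆ v ∈ s, u * v

/-- Internal hom of the quantale: `hom u w = ⨆ {v | u ⊗ v ≤ w}`. -/
def qhom {V : Type u} [CompleteLattice V] [CommMonoid V] (u w : V) : V :=
  sSup {v | u * v ≤ w}

/-- `a` is a `V`-category structure on `X`. -/
def IsVCat {V : Type u} [CompleteLattice V] [CommMonoid V] {X : Type v}
    (a : X → X → V) : Prop :=
  (∀ x, (1 : V) ≤ a x x) ∧ ∀ x y z, a x y * a y z ≤ a x z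

/-- `f` is a `V`-functor from `(X,a)` to `(Y,b)`. -/
def IsVFunctor {V : Type u} [CompleteLattice V] {X : Type v} {Y : Type w}
    (a : X → X → V) (b : Y → Y → V) (f : X → Y) : Prop :=
  ∀ x y, a x y ≤ b (f x) (f y)

/-- `f` is an initial `V`-functor from `(X,a)` to `(Y,b)`. -/
def IsInitialVFunctor {V : Type u} {X : Type v} {Y : Type w}
    (a : X → X → V) (b : Y → Y → V) (f : X → Y) : Prop :=
  ∀ x y, a x y = b (f x) (f y)

/-- The `V`-category structure of the power `V^κ`. -/
def powStr {V : Type u} [CompleteLattice V] [CommMonoid V] (κ : Type v)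
    (p q : κ → V) : V :=
  ⨅ i, qhom (p i) (q i)

/-- The graph of a function, as a `V`-relation: `k` on the graph, `⊥` elsewhere. -/
def fnGraph {V : Type u} [CompleteLattice V] [CommMonoid V] {X : Type v} {Y : Type w}
    (f : X → Y) : X → Y → V :=
  fun x y => ⨆ _ : f x = y, (1 : V)

/-- A lifting of a `Set`-functor `F` to `V`-Cat. -/
structure Lifting (V : Type u) [CompleteLattice V] [CommMonoid V]
    (F : Type u ⥤ Type u) where
  str : ∀ {X : Type u}, (X → X → V) → F.obj X → F.obj X → V
  isVCat : ∀ {X : Type u} (a : X → X → V), IsVCat a → IsVCat (str a)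
  map : ∀ {X Y : Type u} (a : X → X → V) (b : Y → Y → V) (f : X → Y),
    IsVCat a → IsVCat b → IsVFunctor a b f →
    IsVFunctor (str a) (str b) ⇑(F.map (TypeCat.ofHom f))

/-- A `κ`-ary `V`-valued predicate lifting for a `Set`-functor `F`. -/
structure PredLifting (V : Type u) [CompleteLattice V] [CommMonoid V]
    (F : Type u ⥤ Type u) (κ : Type u) where
  app : ∀ {X : Type u}, (X → κ → V) → F.obj X → V
  natural : ∀ {X Y : Type u} (f : X → Y) (p : Y → κ → V) (t : F.obj X),
    app (fun x => p (f x)) t = app p (F.map (TypeCat.ofHom f) t)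

/-- A predicate lifting is monotone if it preserves the pointwise order of predicates. -/
def PredLifting.Mono {V : Type u} [CompleteLattice V] [CommMonoid V]
    {F : Type u ⥤ Type u} {κ : Type u} (lam : PredLifting V F κ) : Prop :=
  ∀ (X : Type u) (p q : X → κ → V), (∀ x i, p x i ≤ q x i) →
    ∀ t, lam.app p t ≤ lam.app q t

/-- A predicate lifting is compatible with a lifting `L` if it lifts `V`-functorial
predicates to `V`-functorial predicates. -/
def Compatible {V : Type u} [CompleteLattice V] [CommMonoid V] {F : Type u ⥤ Type u}
    (L : Lifting V F) {κ : Type u} (lam : PredLifting V F κ) : Prop :=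
  ∀ (X : Type u) (a : X → X → V), IsVCat a → ∀ f : X → κ → V,
    IsVFunctor a (powStr κ) f → IsVFunctor (L.str a) qhom (lam.app f)

/-- The Kantorovich `V`-category structure on `F.obj X` induced by a family of
predicate liftings. -/
noncomputable def kantStr {V : Type u} [CompleteLattice V] [CommMonoid V]
    {F : Type u ⥤ Type u} {ι : Type v} {κ : ι → Type u}
    (Λ : ∀ l, PredLifting V F (κ l)) {X : Type u} (a : X → X → V)
    (t s : F.obj X) : V :=
  ⨅ l, ⨅ f : {f : X → κ l → V // IsVFunctor a (powStr (κ l)) f},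
    qhom ((Λ l).app f.1 t) ((Λ l).app f.1 s)

/-- A generalized predicate lifting for `(F, L)` with parameter `V`-category `(A, α)`. -/
structure GenPredLifting (V : Type u) [CompleteLattice V] [CommMonoid V]
    (F : Type u ⥤ Type u) (L : Lifting V F) (A : Type u) (α : A → A → V) where
  app : ∀ {Z : Type u}, (Z → Z → V) → (Z → A) → F.obj Z → V
  isVFunctor : ∀ {Z : Type u} (c : Z → Z → V), IsVCat c → ∀ f : Z → A,
    IsVFunctor c α f → IsVFunctor (L.str c) qhom (app c f)
  natural : ∀ {Z Z' : Type u} (c : Z → Z → V) (c' : Z' → Z' → V),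
    IsVCat c → IsVCat c' → ∀ (u : Z → Z'), IsVFunctor c c' u →
    ∀ (g : Z' → A), IsVFunctor c' α g →
    ∀ t : F.obj Z, app c (fun z => g (u z)) t = app c' g (F.map (TypeCat.ofHom u) t)

/-- A lax extension of a `Set`-functor `F` to `V`-Rel. -/
structure LaxExt (V : Type u) [CompleteLattice V] [CommMonoid V]
    (F : Type u ⥤ Type u) where
  ext : ∀ {X Y : Type u}, (X → Y → V) → F.obj X → F.obj Y → V
  mono : ∀ {X Y : Type u} (r r' : X → Y → V), (∀ x y, r x y ≤ r' x y) →
    ∀ t s, ext r t s ≤ ext r' t s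
  comp : ∀ {X Y Z : Type u} (r : X → Y → V) (s : Y → Z → V)
    (t : F.obj X) (w : F.obj Z),
    (⨆ u : F.obj Y, ext r t u * ext s u w) ≤
      ext (fun x z => ⨆ y, r x y * s y z) t w
  lax_map : ∀ {X Y : Type u} (f : X → Y) (t : F.obj X),
    (1 : V) ≤ ext (fnGraph f) t (F.map (TypeCat.ofHom f) t)
  lax_map_op : ∀ {X Y : Type u} (f : X → Y) (t : F.obj X),
    (1 : V) ≤ ext (fun y x => fnGraph f x y) (F.map (TypeCat.ofHom f) t) t


section Aux

variable {V : Type u} [CompleteLattice V] [CommMonoid V]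

lemma quant_mul_bot (hV : QuantaleLaw V) (u : V) : u * (⊥ : V) = ⊥ := by
  have := hV u ∅
  simpa using this

lemma quant_bot_mul (hV : QuantaleLaw V) (u : V) : (⊥ : V) * u = ⊥ := by
  rw [mul_comm]; exact quant_mul_bot hV u

lemma quant_mul_le_mul_left (hV : QuantaleLaw V) {v v' : V} (u : V) (hvv : v ≤ v') :
    u * v ≤ u * v' := by
  have h1 : u * v' = u * sSup {v, v'} := by
    rw [sSup_pair, sup_eq_right.mpr hvv]
  rw [h1, hV u {v, v'}]
  exact le_biSup _ (by simp)

lemma quant_mul_le_mul_right (hV : QuantaleLaw V) {v v' : V} (u : V) (hvv : v ≤ v') :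
    v * u ≤ v' * u := by
  rw [mul_comm, mul_comm v' u]; exact quant_mul_le_mul_left hV u hvv

/-- The collage of a relation `r : X → Y → V`: a `V`-category structure on `X ⊕ Y`. -/
def collage {X Y : Type v} (r : X → Y → V) : X ⊕ Y → X ⊕ Y → V
  | .inl x, .inl x' => ⨆ _ : x = x', (1 : V)
  | .inl x, .inr y => r x y
  | .inr _, .inl _ => ⊥
  | .inr y, .inr y' => ⨆ _ : y = y', (1 : V)

lemma sup_one_mul_le (hV : QuantaleLaw V) {p : Prop} {c d : V} (hpc : p → c ≤ d) :
    (⨆ _ : p, (1 : V)) * c ≤ d := by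
  by_cases hp : p
  · rw [iSup_pos hp, one_mul]; exact hpc hp
  · rw [iSup_neg hp, quant_bot_mul hV]; exact bot_le

lemma mul_sup_one_le (hV : QuantaleLaw V) {p : Prop} {c d : V} (hpc : p → c ≤ d) :
    c * (⨆ _ : p, (1 : V)) ≤ d := by
  by_cases hp : p
  · rw [iSup_pos hp, mul_one]; exact hpc hp
  · rw [iSup_neg hp, quant_mul_bot hV]; exact bot_le

lemma collage_isVCat (hV : QuantaleLaw V) {X Y : Type v} (r : X → Y → V) :
    IsVCat (collage r) := by
  constructor
  · rintro (x | y) <;> simp [collage]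
  · rintro (x | y) (x' | y') (x'' | y'') <;> simp only [collage] <;>
      first
      | (rw [quant_mul_bot hV]; exact bot_le)
      | (rw [quant_bot_mul hV]; exact bot_le)
      | exact sup_one_mul_le hV (fun hx => by subst hx; exact le_rfl)
      | exact mul_sup_one_le hV (fun hy => by subst hy; exact le_rfl)

end Aux

/-- the assignment of induced liftings to lax extensions is
order-reflecting. -/
theorem stmt_12 {V : Type u} [CompleteLattice V] [CommMonoid V] (hV : QuantaleLaw V)
    {F : Type u ⥤ Type u} (E E' : LaxExt V F)
    (h : ∀ (X : Type u) (a : X → X → V), IsVCat a →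
      ∀ t s : F.obj X, E.ext a t s ≤ E'.ext a t s)
    {X Y : Type u} (r : X → Y → V) (t : F.obj X) (s : F.obj Y) :
    E.ext r t s ≤ E'.ext r t s := by
  set a := collage (V := V) r with ha
  have hacat : IsVCat a := collage_isVCat hV r
  set ti : F.obj (X ⊕ Y) := F.map (TypeCat.ofHom Sum.inl) t
  set si : F.obj (X ⊕ Y) := F.map (TypeCat.ofHom Sum.inr) s
  -- Step 1: E r t s ≤ E a ti si
  have step1 : E.ext r t s ≤ E.ext a ti si := by
    -- first: E r t s ≤ E (fun x w => a (.inl x) w) t si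
    have h1 : E.ext r t s ≤ E.ext (fun x w => a (.inl x) w) t si := by
      have hc := E.comp r (fnGraph Sum.inr) t si
      have hle : E.ext r t s ≤ ⨆ u : F.obj Y, E.ext r t u * E.ext (fnGraph Sum.inr) u si := by
        refine le_trans ?_ (le_iSup _ s)
        calc E.ext r t s = E.ext r t s * 1 := (mul_one _).symm
          _ ≤ E.ext r t s * E.ext (fnGraph Sum.inr) s si :=
            quant_mul_le_mul_left hV _ (E.lax_map Sum.inr s)
      refine le_trans (le_trans hle hc) (E.mono _ _ ?_ t si)
      intro x w
      refine iSup_le fun y => ?_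
      rcases w with x' | y'
      · simp only [fnGraph]
        rw [iSup_neg (by simp), quant_mul_bot hV]
        exact bot_le
      · simp only [fnGraph]
        by_cases hy : y = y'
        · subst hy; rw [iSup_pos rfl, mul_one]; exact le_rfl
        · rw [iSup_neg (by simp [hy]), quant_mul_bot hV]; exact bot_le
    -- then: compose with inl° on the left
    have hc := E.comp (fun w x => fnGraph Sum.inl x w) (fun x w => a (.inl x) w) ti si
    have hle : E.ext (fun x w => a (.inl x) w) t si ≤
        ⨆ u : F.obj X, E.ext (fun w x => fnGraph Sum.inl x w) ti u *
          E.ext (fun x w => a (.inl x) w) u si := by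
      refine le_trans ?_ (le_iSup _ t)
      calc E.ext (fun x w => a (.inl x) w) t si
          = 1 * E.ext (fun x w => a (.inl x) w) t si := (one_mul _).symm
        _ ≤ _ := quant_mul_le_mul_right hV _ (E.lax_map_op Sum.inl t)
    refine le_trans (le_trans h1 (le_trans hle hc)) (E.mono _ _ ?_ ti si)
    intro w w'
    refine iSup_le fun x => ?_
    simp only [fnGraph]
    by_cases hw : Sum.inl x = w
    · subst hw; rw [iSup_pos rfl, one_mul]
    · rw [iSup_neg hw, quant_bot_mul hV]; exact bot_le
  -- Step 2: E a ti si ≤ E' a ti si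
  have step2 : E.ext a ti si ≤ E'.ext a ti si := h _ a hacat ti si
  -- Step 3: E' a ti si ≤ E' r t s
  have step3 : E'.ext a ti si ≤ E'.ext r t s := by
    -- compose with inl_* on the left
    have h1 : E'.ext a ti si ≤ E'.ext (fun x w => a (.inl x) w) t si := by
      have hc := E'.comp (fnGraph Sum.inl) a t si
      have hle : E'.ext a ti si ≤
          ⨆ u : F.obj (X ⊕ Y), E'.ext (fnGraph Sum.inl) t u * E'.ext a u si := by
        refine le_trans ?_ (le_iSup _ ti)
        calc E'.ext a ti si = 1 * E'.ext a ti si := (one_mul _).symm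
          _ ≤ _ := quant_mul_le_mul_right hV _ (E'.lax_map Sum.inl t)
      refine le_trans (le_trans hle hc) (E'.mono _ _ ?_ t si)
      intro x w
      refine iSup_le fun w' => ?_
      simp only [fnGraph]
      by_cases hw : Sum.inl x = w'
      · subst hw; rw [iSup_pos rfl, one_mul]
      · rw [iSup_neg hw, quant_bot_mul hV]; exact bot_le
    -- compose with inr° on the right
    have hc := E'.comp (fun x w => a (.inl x) w) (fun w y => fnGraph Sum.inr y w) t s
    have hle : E'.ext (fun x w => a (.inl x) w) t si ≤
        ⨆ u : F.obj (X ⊕ Y), E'.ext (fun x w => a (.inl x) w) t u *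
          E'.ext (fun w y => fnGraph Sum.inr y w) u s := by
      refine le_trans ?_ (le_iSup _ si)
      calc E'.ext (fun x w => a (.inl x) w) t si
          = E'.ext (fun x w => a (.inl x) w) t si * 1 := (mul_one _).symm
        _ ≤ _ := quant_mul_le_mul_left hV _ (E'.lax_map_op Sum.inr s)
    refine le_trans (le_trans h1 (le_trans hle hc)) (E'.mono _ _ ?_ t s)
    intro x y
    refine iSup_le fun w => ?_
    simp only [fnGraph]
    by_cases hw : Sum.inr y = w
    · subst hw; rw [iSup_pos rfl, mul_one]
      exact le_refl (a (.inl x) (.inr y))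
    · rw [iSup_neg hw, quant_mul_bot hV]; exact bot_le
  exact le_trans step1 (le_trans step2 step3)
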